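/- Let d ≥ 1 and C_d = [0,1]^d. Every two-point design Z = {z_1, z_2} ⊆ C_d satisfies CR(Z) ≥ (1/2)·√(d − 3/4), and this bound is attained: the design Z* = {z*_1, 1_d − z*_1} with z*_1 = (1/2, …, 1/2, 1/4) satisfies CR(Z*) = (1/2)·√(d − 3/4). Moreover, any two-point design containing the center 1_d/2 of C_d has covering radius exactly √d/2. -/

import Mathlib

open Metric

/-- The unit hypercube `[0,1]^d` in `ℝ^d`. -/
def unitCube (d : ℕ) : Set (EuclideanSpace ℝ (Fin d)) :=
  {x | ∀ i, x i ∈ Set.Icc (0 : ℝ) 1}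

/-- The covering radius `CR(A) = sup_{x∈X} d(x,A)` of a design `A` in the domain `X`. -/
noncomputable def covRad {d : ℕ} (X A : Set (EuclideanSpace ℝ (Fin d))) : ℝ :=
  sSup ((fun x => infDist x A) '' X)

/-- The center `1_d/2` of the unit hypercube. -/
noncomputable def cubeCenter (d : ℕ) : EuclideanSpace ℝ (Fin d) :=
  (WithLp.equiv 2 (Fin d → ℝ)).symm (fun _ => 1 / 2)

/-- The point `z*_1 = (1/2, …, 1/2, 1/4)` (all coordinates `1/2` except the last one,
which equals `1/4`). -/
noncomputable def zStar (d : ℕ) : EuclideanSpace ℝ (Fin d) :=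
  (WithLp.equiv 2 (Fin d → ℝ)).symm (fun i => if (i : ℕ) = d - 1 then 1 / 4 else 1 / 2)

/-- The point `1_d − z`. -/
noncomputable def onesSub {d : ℕ} (z : EuclideanSpace ℝ (Fin d)) :
    EuclideanSpace ℝ (Fin d) :=
  (WithLp.equiv 2 (Fin d → ℝ)).symm (fun i => 1 - z i)


/-- contribution to the "own" sum: `true` = this side favored. -/
def Bfn (b : Bool) (t : ℝ) : ℝ := if b then t + t^2 else -(t - t^2)

lemma Bfn_true (t : ℝ) : Bfn true t = t + t^2 := rfl
lemma Bfn_false (t : ℝ) : Bfn false t = -(t - t^2) := rfl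

/-- Balancing lemma: one side can always be kept ≥ 0, with the other side losing at most
`g` of one designated element. -/
lemma lemR {d : ℕ} : ∀ (n : ℕ) (S : Finset (Fin d)), S.card = n →
    ∀ (u v : Fin d → ℝ), (∀ i ∈ S, 0 < u i ∧ u i ≤ 1/2) → (∀ i ∈ S, 0 < v i ∧ v i ≤ 1/2) →
    ∃ (σ : Fin d → Bool),
      (0 ≤ ∑ i ∈ S, Bfn (σ i) (u i)) ∧
      ((0 ≤ ∑ i ∈ S, Bfn (!(σ i)) (v i)) ∨
        ∃ j ∈ S, -(v j - (v j)^2) ≤ ∑ i ∈ S, Bfn (!(σ i)) (v i)) := by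
  intro n
  induction n using Nat.strong_induction_on with
  | _ n ih =>
    intro S hcard u v hu hv
    rcases S.eq_empty_or_nonempty with rfl | hS
    · exact ⟨fun _ => true, by simp, Or.inl (by simp)⟩
    obtain ⟨m, hm, hmax⟩ := S.exists_max_image u hS
    classical
    set S' := S.erase m with hS'def
    have hcard' : S'.card < n := by
      rw [← hcard]; exact Finset.card_erase_lt_of_mem hm
    have hsub : S' ⊆ S := Finset.erase_subset _ _
    obtain ⟨σ', h1, h2⟩ := ih S'.card hcard' S' rfl v u
      (fun i hi => hv i (hsub hi)) (fun i hi => hu i (hsub hi))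
    refine ⟨fun i => if i = m then true else !(σ' i), ?_, ?_⟩
    · have hsplit := Finset.add_sum_erase S
        (fun i => Bfn (if i = m then true else !(σ' i)) (u i)) hm
      rw [← hsplit]
      simp only [eq_self_iff_true, if_true]
      have hrest : ∑ i ∈ S.erase m, Bfn (if i = m then true else !(σ' i)) (u i)
          = ∑ i ∈ S', Bfn (!(σ' i)) (u i) := by
        refine Finset.sum_congr rfl fun i hi => ?_
        rw [if_neg (Finset.ne_of_mem_erase hi)]
      rw [hrest, Bfn_true]
      have hum := hu m hm
      rcases h2 with h2 | ⟨j, hj, h2⟩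
      · nlinarith [hum.1]
      · have hj' := hu j (hsub hj)
        have : u j ≤ u m := hmax j (hsub hj)
        nlinarith [hj'.1]
    · refine Or.inr ⟨m, hm, ?_⟩
      have hsplit := Finset.add_sum_erase S
        (fun i => Bfn (!(if i = m then true else !(σ' i))) (v i)) hm
      rw [← hsplit]
      simp only [eq_self_iff_true, if_true]
      have hrest : ∑ i ∈ S.erase m, Bfn (!(if i = m then true else !(σ' i))) (v i)
          = ∑ i ∈ S', Bfn (σ' i) (v i) := by
        refine Finset.sum_congr rfl fun i hi => ?_
        rw [if_neg (Finset.ne_of_mem_erase hi)]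
        simp
      rw [hrest, show Bfn (!true) (v m) = -(v m - (v m)^2) from rfl]
      linarith

def cmap (b : Bool) : ℕ := if b then 0 else 1

/-- contribution to the first (z₁) sum for choice `k` (0 = far from z₁, 1 = far from z₂,
2 = midpoint). -/
noncomputable def Ca (k : ℕ) (x : ℝ) : ℝ := if k = 0 then x + x^2 else if k = 1 then -(x - x^2) else x^2 - 1/4
/-- contribution to the second (z₂) sum. -/
noncomputable def Cc (k : ℕ) (x : ℝ) : ℝ := if k = 0 then -(x - x^2) else if k = 1 then x + x^2 else x^2 - 1/4

lemma Ca_cmap (b : Bool) (x : ℝ) : Ca (cmap b) x = Bfn b x := by cases b <;> rfl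
lemma Cc_cmap (b : Bool) (x : ℝ) : Cc (cmap b) x = Bfn (!b) x := by cases b <;> rfl

lemma sum_split_one {d : ℕ} (S : Finset (Fin d)) (m : Fin d) (hm : m ∈ S)
    (f : Fin d → ℝ) (c : ℝ) (g : Fin d → ℝ) (hc : f m = c)
    (h : ∀ i ∈ S.erase m, f i = g i) :
    ∑ i ∈ S, f i = c + ∑ i ∈ S.erase m, g i := by
  rw [← Finset.add_sum_erase S f hm, hc]
  exact congrArg _ (Finset.sum_congr rfl h)

lemma gle14 (x : ℝ) : x - x^2 ≤ 1/4 := by nlinarith [sq_nonneg (x - 1/2)]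

/-- Key combinatorial lemma: choices for the split coordinates with both deficits `≤ 3/16`. -/
lemma keyLemma {d : ℕ} (S : Finset (Fin d)) (u v : Fin d → ℝ)
    (hu : ∀ i ∈ S, 0 < u i ∧ u i ≤ 1/2) (hv : ∀ i ∈ S, 0 < v i ∧ v i ≤ 1/2) :
    ∃ t : Fin d → ℕ,
      (-(3/16) ≤ ∑ i ∈ S, Ca (t i) (u i)) ∧ (-(3/16) ≤ ∑ i ∈ S, Cc (t i) (v i)) := by
  classical
  rcases S.eq_empty_or_nonempty with rfl | hS
  · exact ⟨fun _ => 0, by norm_num, by norm_num⟩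
  obtain ⟨m, hm, hmax⟩ := S.exists_max_image u hS
  set S' := S.erase m with hS'def
  have hsub : S' ⊆ S := Finset.erase_subset _ _
  have hu' : ∀ i ∈ S', 0 < u i ∧ u i ≤ 1/2 := fun i hi => hu i (hsub hi)
  have hv' : ∀ i ∈ S', 0 < v i ∧ v i ≤ 1/2 := fun i hi => hv i (hsub hi)
  have hum0 := (hu m hm).1
  have hum2 := (hu m hm).2
  have hvm0 := (hv m hm).1
  have hvm2 := (hv m hm).2
  by_cases hvm : v m ≤ 1/4
  · -- element m far from z₁; rest c-favored
    obtain ⟨σ', h1, h2⟩ := lemR S'.card S' rfl v u hv' hu'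
    refine ⟨fun i => if i = m then 0 else cmap (!(σ' i)), ?_, ?_⟩
    · rw [sum_split_one S m hm _ (u m + (u m)^2) (fun i => Bfn (!(σ' i)) (u i))
        (by simp [Ca]) (fun i hi => by simp [Finset.ne_of_mem_erase hi, Ca_cmap])]
      rcases h2 with h2 | ⟨j, hj, h2⟩
      · nlinarith
      · have hjm : u j ≤ u m := hmax j (hsub hj)
        have := (hu' j hj).1
        nlinarith
    · rw [sum_split_one S m hm _ (-(v m - (v m)^2)) (fun i => Bfn (σ' i) (v i))
        (by simp [Cc]) (fun i hi => by simp [Finset.ne_of_mem_erase hi, Cc_cmap])]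
      nlinarith
  · by_cases hum : u m ≤ 1/4
    · -- element m far from z₂; rest a-favored
      obtain ⟨σ', h1, h2⟩ := lemR S'.card S' rfl u v hu' hv'
      have hrest : -(1/4) ≤ ∑ i ∈ S', Bfn (!(σ' i)) (v i) := by
        rcases h2 with h2 | ⟨j, hj, h2⟩
        · linarith
        · have := gle14 (v j); linarith
      refine ⟨fun i => if i = m then 1 else cmap (σ' i), ?_, ?_⟩
      · rw [sum_split_one S m hm _ (-(u m - (u m)^2)) (fun i => Bfn (σ' i) (u i))
          (by simp [Ca]) (fun i hi => by simp [Finset.ne_of_mem_erase hi, Ca_cmap])]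
        nlinarith
      · rw [sum_split_one S m hm _ (v m + (v m)^2) (fun i => Bfn (!(σ' i)) (v i))
          (by simp [Cc]) (fun i hi => by simp [Finset.ne_of_mem_erase hi, Cc_cmap])]
        push_neg at hvm
        nlinarith
    · push_neg at hvm hum
      by_cases hA : ∃ j ∈ S', v m - (v m)^2 - 3/16 ≤ v j + (v j)^2
      · obtain ⟨j, hj, hfj⟩ := hA
        set S'' := S'.erase j with hS''def
        have hsub2 : S'' ⊆ S' := Finset.erase_subset _ _
        obtain ⟨σ', h1, h2⟩ := lemR S''.card S'' rfl v u
          (fun i hi => hv' i (hsub2 hi)) (fun i hi => hu' i (hsub2 hi))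
        have huj0 := (hu' j hj).1
        have huj2 := (hu' j hj).2
        have hvj0 := (hv' j hj).1
        have hjm : j ≠ m := Finset.ne_of_mem_erase hj
        refine ⟨fun i => if i = m then 0 else if i = j then 1 else cmap (!(σ' i)), ?_, ?_⟩
        · rw [sum_split_one S m hm _ (u m + (u m)^2)
            (fun i => if i = j then -(u i - (u i)^2) else Bfn (!(σ' i)) (u i))
            (by simp [Ca])
            (fun i hi => by
              by_cases hij : i = j
              · simp [Finset.ne_of_mem_erase hi, hij, hjm, Ca]
              · simp [Finset.ne_of_mem_erase hi, hij, Ca_cmap]),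
            sum_split_one S' j hj _ (-(u j - (u j)^2)) (fun i => Bfn (!(σ' i)) (u i))
              (by simp) (fun i hi => by simp [Finset.ne_of_mem_erase hi])]
          have hrest : -(1/4) ≤ ∑ i ∈ S'', Bfn (!(σ' i)) (u i) := by
            rcases h2 with h2 | ⟨j', hj', h2⟩
            · linarith
            · have := gle14 (u j'); linarith
          have := gle14 (u j)
          nlinarith
        · rw [sum_split_one S m hm _ (-(v m - (v m)^2))
            (fun i => if i = j then v i + (v i)^2 else Bfn (σ' i) (v i))
            (by simp [Cc])
            (fun i hi => by
              by_cases hij : i = j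
              · simp [Finset.ne_of_mem_erase hi, hij, hjm, Cc]
              · simp [Finset.ne_of_mem_erase hi, hij, Cc_cmap]),
            sum_split_one S' j hj _ (v j + (v j)^2) (fun i => Bfn (σ' i) (v i))
              (by simp) (fun i hi => by simp [Finset.ne_of_mem_erase hi])]
          linarith
      · by_cases hB : ∃ j ∈ S', u m - (u m)^2 - 3/16 ≤ u j + (u j)^2
        · obtain ⟨j, hj, hfj⟩ := hB
          set S'' := S'.erase j with hS''def
          have hsub2 : S'' ⊆ S' := Finset.erase_subset _ _
          obtain ⟨σ', h1, h2⟩ := lemR S''.card S'' rfl u v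
            (fun i hi => hu' i (hsub2 hi)) (fun i hi => hv' i (hsub2 hi))
          have huj0 := (hu' j hj).1
          have hvj0 := (hv' j hj).1
          have hvj2 := (hv' j hj).2
          have hjm : j ≠ m := Finset.ne_of_mem_erase hj
          refine ⟨fun i => if i = m then 1 else if i = j then 0 else cmap (σ' i), ?_, ?_⟩
          · rw [sum_split_one S m hm _ (-(u m - (u m)^2))
              (fun i => if i = j then u i + (u i)^2 else Bfn (σ' i) (u i))
              (by simp [Ca])
              (fun i hi => by
                by_cases hij : i = j
                · simp [Finset.ne_of_mem_erase hi, hij, hjm, Ca]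
                · simp [Finset.ne_of_mem_erase hi, hij, Ca_cmap]),
              sum_split_one S' j hj _ (u j + (u j)^2) (fun i => Bfn (σ' i) (u i))
                (by simp) (fun i hi => by simp [Finset.ne_of_mem_erase hi])]
            linarith
          · rw [sum_split_one S m hm _ (v m + (v m)^2)
              (fun i => if i = j then -(v i - (v i)^2) else Bfn (!(σ' i)) (v i))
              (by simp [Cc])
              (fun i hi => by
                by_cases hij : i = j
                · simp [Finset.ne_of_mem_erase hi, hij, hjm, Cc]
                · simp [Finset.ne_of_mem_erase hi, hij, Cc_cmap]),
              sum_split_one S' j hj _ (-(v j - (v j)^2)) (fun i => Bfn (!(σ' i)) (v i))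
                (by simp) (fun i hi => by simp [Finset.ne_of_mem_erase hi])]
            have hrest : -(1/4) ≤ ∑ i ∈ S'', Bfn (!(σ' i)) (v i) := by
              rcases h2 with h2 | ⟨j', hj', h2⟩
              · linarith
              · have := gle14 (v j'); linarith
            have := gle14 (v j)
            nlinarith
        · -- both fail: m goes to the midpoint, rest c-favored
          push_neg at hB
          obtain ⟨σ', h1, h2⟩ := lemR S'.card S' rfl v u hv' hu'
          refine ⟨fun i => if i = m then 2 else cmap (!(σ' i)), ?_, ?_⟩
          · rw [sum_split_one S m hm _ ((u m)^2 - 1/4) (fun i => Bfn (!(σ' i)) (u i))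
              (by simp [Ca]) (fun i hi => by simp [Finset.ne_of_mem_erase hi, Ca_cmap])]
            rcases h2 with h2 | ⟨j, hj, h2⟩
            · nlinarith
            · have hfuj := hB j hj
              have := (hu' j hj).1
              nlinarith [sq_nonneg (u m - 1/4)]
          · rw [sum_split_one S m hm _ ((v m)^2 - 1/4) (fun i => Bfn (σ' i) (v i))
              (by simp [Cc]) (fun i hi => by simp [Finset.ne_of_mem_erase hi, Cc_cmap])]
            nlinarith

/-! ### Geometric glue -/

lemma dist_eq_sqrt_sum {d : ℕ} (x z : EuclideanSpace ℝ (Fin d)) :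
    dist x z = Real.sqrt (∑ i, (x i - z i)^2) := by
  rw [EuclideanSpace.dist_eq]
  congr 1
  exact Finset.sum_congr rfl fun i _ => by rw [Real.dist_eq, sq_abs]

lemma sum_quarter (d : ℕ) : ∑ _i : Fin d, (1/4 : ℝ) = (d : ℝ)/4 := by
  rw [Finset.sum_const, Finset.card_univ, Fintype.card_fin, nsmul_eq_mul]
  ring

lemma le_infDist_of {d : ℕ} (x : EuclideanSpace ℝ (Fin d))
    (A : Set (EuclideanSpace ℝ (Fin d))) (hA : A.Nonempty) (r : ℝ)
    (h : ∀ z ∈ A, r ≤ dist x z) : r ≤ infDist x A := by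
  by_contra hlt
  push_neg at hlt
  obtain ⟨y, hy, hd⟩ := (Metric.infDist_lt_iff hA).mp hlt
  exact absurd hd (not_lt.mpr (h y hy))

lemma bdd_infDist {d : ℕ} (A : Set (EuclideanSpace ℝ (Fin d)))
    (a0 : EuclideanSpace ℝ (Fin d)) (ha0 : a0 ∈ A) (ha0c : a0 ∈ unitCube d) :
    BddAbove ((fun x => infDist x A) '' unitCube d) := by
  refine ⟨Real.sqrt d, ?_⟩
  rintro _ ⟨x, hx, rfl⟩
  have h1 : infDist x A ≤ dist x a0 := infDist_le_dist_of_mem ha0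
  have h2 : dist x a0 ≤ Real.sqrt d := by
    rw [dist_eq_sqrt_sum]
    have : ∑ i, (x i - a0 i)^2 ≤ ∑ _i : Fin d, (1:ℝ) := by
      refine Finset.sum_le_sum fun i _ => ?_
      have hxi := hx i
      have hai := ha0c i
      simp only [Set.mem_Icc] at hxi hai
      nlinarith [hxi.1, hxi.2, hai.1, hai.2]
    calc Real.sqrt (∑ i, (x i - a0 i)^2) ≤ Real.sqrt (∑ _i : Fin d, (1:ℝ)) :=
          Real.sqrt_le_sqrt this
      _ = Real.sqrt d := by rw [Finset.sum_const, Finset.card_univ, Fintype.card_fin,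
            nsmul_eq_mul, mul_one]
  linarith

lemma cubeCenter_mem (d : ℕ) : cubeCenter d ∈ unitCube d := by
  intro i
  simp only [cubeCenter, WithLp.equiv_symm_apply, PiLp.toLp_apply, Set.mem_Icc]
  norm_num

lemma sqrt_div_two (A : ℝ) (hA : 0 ≤ A) : Real.sqrt A / 2 = Real.sqrt (A/4) := by
  rw [show A/4 = (Real.sqrt A / 2)^2 by rw [div_pow, Real.sq_sqrt hA]; norm_num]
  rw [Real.sqrt_sq (by positivity)]



/-! ### scalar per-coordinate inequalities -/

lemma coordCa_lt (z : ℝ) (k : ℕ) (h : z < 1/2) (h0 : 0 ≤ z) :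
    1/4 + Ca k |z - 1/2| ≤ ((if k = 0 then (1:ℝ) else if k = 1 then 0 else 1/2) - z)^2 := by
  have habs : |z - 1/2| = 1/2 - z := by rw [abs_of_neg (by linarith)]; ring
  rw [habs]
  by_cases hk0 : k = 0
  · simp only [hk0, Ca]; norm_num <;> nlinarith
  · by_cases hk1 : k = 1
    · simp only [hk1, Ca]; norm_num <;> nlinarith
    · simp only [Ca, if_neg hk0, if_neg hk1]; nlinarith

lemma coordCa_gt (z : ℝ) (k : ℕ) (h : 1/2 < z) (h1 : z ≤ 1) :
    1/4 + Ca k |z - 1/2| ≤ ((if k = 0 then (0:ℝ) else if k = 1 then 1 else 1/2) - z)^2 := by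
  have habs : |z - 1/2| = z - 1/2 := by rw [abs_of_pos (by linarith)]
  rw [habs]
  by_cases hk0 : k = 0
  · simp only [hk0, Ca]; norm_num <;> nlinarith
  · by_cases hk1 : k = 1
    · simp only [hk1, Ca]; norm_num <;> nlinarith
    · simp only [Ca, if_neg hk0, if_neg hk1]; nlinarith

lemma coordCc_gt (z : ℝ) (k : ℕ) (h : 1/2 < z) (h1 : z ≤ 1) :
    1/4 + Cc k |z - 1/2| ≤ ((if k = 0 then (1:ℝ) else if k = 1 then 0 else 1/2) - z)^2 := by
  have habs : |z - 1/2| = z - 1/2 := by rw [abs_of_pos (by linarith)]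
  rw [habs]
  by_cases hk0 : k = 0
  · simp only [hk0, Cc]; norm_num <;> nlinarith
  · by_cases hk1 : k = 1
    · simp only [hk1, Cc]; norm_num <;> nlinarith
    · simp only [Cc, if_neg hk0, if_neg hk1]; nlinarith

lemma coordCc_lt (z : ℝ) (k : ℕ) (h : z < 1/2) (h0 : 0 ≤ z) :
    1/4 + Cc k |z - 1/2| ≤ ((if k = 0 then (0:ℝ) else if k = 1 then 1 else 1/2) - z)^2 := by
  have habs : |z - 1/2| = 1/2 - z := by rw [abs_of_neg (by linarith)]; ring
  rw [habs]
  by_cases hk0 : k = 0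
  · simp only [hk0, Cc]; norm_num <;> nlinarith
  · by_cases hk1 : k = 1
    · simp only [hk1, Cc]; norm_num <;> nlinarith
    · simp only [Cc, if_neg hk0, if_neg hk1]; nlinarith

/-- The far-point construction. -/
lemma exists_far {d : ℕ} (z1 z2 : EuclideanSpace ℝ (Fin d))
    (h1 : z1 ∈ unitCube d) (h2 : z2 ∈ unitCube d) :
    ∃ x : EuclideanSpace ℝ (Fin d), x ∈ unitCube d ∧
      (d : ℝ)/4 - 3/16 ≤ ∑ i, (x i - z1 i)^2 ∧
      (d : ℝ)/4 - 3/16 ≤ ∑ i, (x i - z2 i)^2 := by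
  classical
  set S : Finset (Fin d) := Finset.univ.filter
    (fun i => z1 i < 1/2 ∧ 1/2 < z2 i ∨ z2 i < 1/2 ∧ 1/2 < z1 i) with hSdef
  set u : Fin d → ℝ := fun i => |z1 i - 1/2| with hudef
  set v : Fin d → ℝ := fun i => |z2 i - 1/2| with hvdef
  have hu : ∀ i ∈ S, 0 < u i ∧ u i ≤ 1/2 := by
    intro i hi
    have hc := (Finset.mem_filter.mp hi).2
    have hz1 := h1 i; simp only [Set.mem_Icc] at hz1
    constructor
    · simp only [hudef]
      rw [abs_pos]
      rcases hc with ⟨ha, _⟩ | ⟨_, hb⟩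
      · intro hc'; rw [sub_eq_zero] at hc'; rw [hc'] at ha; linarith
      · intro hc'; rw [sub_eq_zero] at hc'; rw [hc'] at hb; linarith
    · simp only [hudef]
      exact abs_le.mpr ⟨by linarith [hz1.1], by linarith [hz1.2]⟩
  have hv : ∀ i ∈ S, 0 < v i ∧ v i ≤ 1/2 := by
    intro i hi
    have hc := (Finset.mem_filter.mp hi).2
    have hz2 := h2 i; simp only [Set.mem_Icc] at hz2
    constructor
    · simp only [hvdef]
      rw [abs_pos]
      rcases hc with ⟨_, hb⟩ | ⟨ha, _⟩
      · intro hc'; rw [sub_eq_zero] at hc'; rw [hc'] at hb; linarith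
      · intro hc'; rw [sub_eq_zero] at hc'; rw [hc'] at ha; linarith
    · simp only [hvdef]
      exact abs_le.mpr ⟨by linarith [hz2.1], by linarith [hz2.2]⟩
  obtain ⟨t, hta, htc⟩ := keyLemma S u v hu hv
  set xf : Fin d → ℝ := fun i =>
    if i ∈ S then
      (if t i = 0 then (if z1 i < 1/2 then 1 else 0)
       else if t i = 1 then (if z1 i < 1/2 then 0 else 1)
       else 1/2)
    else (if z1 i ≤ 1/2 ∧ z2 i ≤ 1/2 then 1 else 0) with hxfdef
  set x : EuclideanSpace ℝ (Fin d) := (WithLp.equiv 2 (Fin d → ℝ)).symm xf with hxdef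
  have hxapp : ∀ i, x i = xf i := fun i => rfl
  have hxcube : x ∈ unitCube d := by
    intro i
    rw [hxapp i]
    simp only [hxfdef, Set.mem_Icc]
    constructor <;> split_ifs <;> norm_num
  refine ⟨x, hxcube, ?_, ?_⟩
  · have hpt : ∀ i, 1/4 + (if i ∈ S then Ca (t i) (u i) else 0) ≤ (x i - z1 i)^2 := by
      intro i
      rw [hxapp i]
      have hz1 := h1 i; have hz2 := h2 i
      simp only [Set.mem_Icc] at hz1 hz2
      by_cases hiS : i ∈ S
      · have hc := (Finset.mem_filter.mp hiS).2
        simp only [hxfdef, if_pos hiS, hudef]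
        rcases hc with ⟨ha, hb⟩ | ⟨hb, ha⟩
        · simp only [if_pos ha]
          exact coordCa_lt (z1 i) (t i) ha hz1.1
        · simp only [if_neg (not_lt.mpr (le_of_lt ha))]
          exact coordCa_gt (z1 i) (t i) ha hz1.2
      · have hns : ¬(z1 i < 1/2 ∧ 1/2 < z2 i ∨ z2 i < 1/2 ∧ 1/2 < z1 i) := by
          intro hcon
          exact hiS (Finset.mem_filter.mpr ⟨Finset.mem_univ i, hcon⟩)
        push_neg at hns
        simp only [hxfdef, if_neg hiS, add_zero]
        by_cases hcc : z1 i ≤ 1/2 ∧ z2 i ≤ 1/2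
        · simp only [if_pos hcc]
          nlinarith [hcc.1, hz1.1]
        · simp only [if_neg hcc]
          have h12 : 1/2 ≤ z1 i := by
            by_contra hcon
            push_neg at hcon
            exact hcc ⟨le_of_lt hcon, hns.1 hcon⟩
          nlinarith [hz1.2]
    calc (d : ℝ)/4 - 3/16
        ≤ (d : ℝ)/4 + ∑ i ∈ S, Ca (t i) (u i) := by linarith
      _ = ∑ i : Fin d, (1/4 + (if i ∈ S then Ca (t i) (u i) else 0)) := by
          rw [Finset.sum_add_distrib, sum_quarter, Finset.sum_ite_mem, Finset.univ_inter]
      _ ≤ ∑ i, (x i - z1 i)^2 := Finset.sum_le_sum fun i _ => hpt i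
  · have hpt : ∀ i, 1/4 + (if i ∈ S then Cc (t i) (v i) else 0) ≤ (x i - z2 i)^2 := by
      intro i
      rw [hxapp i]
      have hz1 := h1 i; have hz2 := h2 i
      simp only [Set.mem_Icc] at hz1 hz2
      by_cases hiS : i ∈ S
      · have hc := (Finset.mem_filter.mp hiS).2
        simp only [hxfdef, if_pos hiS, hvdef]
        rcases hc with ⟨ha, hb⟩ | ⟨hb, ha⟩
        · simp only [if_pos ha]
          exact coordCc_gt (z2 i) (t i) hb hz2.2
        · simp only [if_neg (not_lt.mpr (le_of_lt ha))]
          exact coordCc_lt (z2 i) (t i) hb hz2.1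
      · have hns : ¬(z1 i < 1/2 ∧ 1/2 < z2 i ∨ z2 i < 1/2 ∧ 1/2 < z1 i) := by
          intro hcon
          exact hiS (Finset.mem_filter.mpr ⟨Finset.mem_univ i, hcon⟩)
        push_neg at hns
        simp only [hxfdef, if_neg hiS, add_zero]
        by_cases hcc : z1 i ≤ 1/2 ∧ z2 i ≤ 1/2
        · simp only [if_pos hcc]
          nlinarith [hcc.2, hz2.1]
        · simp only [if_neg hcc]
          have h12 : 1/2 ≤ z2 i := by
            by_contra hcon
            push_neg at hcon
            exact hcc ⟨by linarith [hns.2 hcon], le_of_lt hcon⟩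
          nlinarith [hz2.2]
    calc (d : ℝ)/4 - 3/16
        ≤ (d : ℝ)/4 + ∑ i ∈ S, Cc (t i) (v i) := by linarith
      _ = ∑ i : Fin d, (1/4 + (if i ∈ S then Cc (t i) (v i) else 0)) := by
          rw [Finset.sum_add_distrib, sum_quarter, Finset.sum_ite_mem, Finset.univ_inter]
      _ ≤ ∑ i, (x i - z2 i)^2 := Finset.sum_le_sum fun i _ => hpt i

lemma covRad_le_of {d : ℕ} (A : Set (EuclideanSpace ℝ (Fin d))) (r : ℝ)
    (h : ∀ x ∈ unitCube d, infDist x A ≤ r) : covRad (unitCube d) A ≤ r :=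
  csSup_le ⟨_, Set.mem_image_of_mem _ (cubeCenter_mem d)⟩
    (by rintro _ ⟨x, hx, rfl⟩; exact h x hx)

lemma le_covRad_of {d : ℕ} (A : Set (EuclideanSpace ℝ (Fin d)))
    (a0 : EuclideanSpace ℝ (Fin d)) (ha0 : a0 ∈ A) (ha0c : a0 ∈ unitCube d)
    (x : EuclideanSpace ℝ (Fin d)) (hx : x ∈ unitCube d) (r : ℝ)
    (hr : r ≤ infDist x A) : r ≤ covRad (unitCube d) A :=
  le_trans hr (le_csSup (bdd_infDist A a0 ha0 ha0c) ⟨x, hx, rfl⟩)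

/-- **Two-point `CR`-optimal designs in the hypercube.**  Every two-point design in
`[0,1]^d` has covering radius at least `(1/2)√(d − 3/4)`; the design
`{z*_1, 1_d − z*_1}` with `z*_1 = (1/2,…,1/2,1/4)` attains this bound; and any two-point
design containing the center `1_d/2` has covering radius exactly `√d/2`. -/
theorem two_point_covRad_optimal_cube (d : ℕ) (hd : 1 ≤ d) :
    (∀ Z : Finset (EuclideanSpace ℝ (Fin d)), ↑Z ⊆ unitCube d → Z.card = 2 →
      Real.sqrt ((d : ℝ) - 3 / 4) / 2 ≤
        covRad (unitCube d) (Z : Set (EuclideanSpace ℝ (Fin d)))) ∧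
    covRad (unitCube d) {zStar d, onesSub (zStar d)} =
      Real.sqrt ((d : ℝ) - 3 / 4) / 2 ∧
    (∀ z ∈ unitCube d, covRad (unitCube d) {cubeCenter d, z} = Real.sqrt d / 2) := by
  classical
  have hd1 : (1:ℝ) ≤ (d:ℝ) := by exact_mod_cast hd
  have hd34 : (0:ℝ) ≤ (d:ℝ) - 3/4 := by linarith
  have hrdef : Real.sqrt ((d:ℝ) - 3/4) / 2 = Real.sqrt ((d:ℝ)/4 - 3/16) := by
    rw [sqrt_div_two _ hd34]; congr 1; ring
  set last : Fin d := ⟨d - 1, by omega⟩ with hlastdef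
  have hz_app : ∀ i : Fin d, zStar d i = if (i:ℕ) = d - 1 then (1/4:ℝ) else 1/2 :=
    fun i => rfl
  have ho_app : ∀ i : Fin d, onesSub (zStar d) i
      = if (i:ℕ) = d - 1 then (3/4:ℝ) else 1/2 := by
    intro i
    have : onesSub (zStar d) i = 1 - zStar d i := rfl
    rw [this, hz_app i]
    split_ifs <;> norm_num
  have hlast_iff : ∀ i : Fin d, ((i:ℕ) = d - 1) ↔ i = last := by
    intro i
    constructor
    · intro h; exact Fin.ext h
    · intro h; rw [h]
  have hzsc : zStar d ∈ unitCube d := by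
    intro i
    rw [hz_app i]
    simp only [Set.mem_Icc]
    split_ifs <;> norm_num
  have hosc : onesSub (zStar d) ∈ unitCube d := by
    intro i
    rw [ho_app i]
    simp only [Set.mem_Icc]
    split_ifs <;> norm_num
  have hsum_target : ∑ i : Fin d, ((1/4:ℝ) + (if i = last then -(3/16) else 0))
      = (d:ℝ)/4 - 3/16 := by
    rw [Finset.sum_add_distrib, sum_quarter, Finset.sum_ite_eq' Finset.univ last
      (fun _ => (-(3/16):ℝ)), if_pos (Finset.mem_univ last)]
    ring
  refine ⟨?_, ?_, ?_⟩
  · -- Part 1: lower bound for all two-point designs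
    intro Z hZsub hZcard
    obtain ⟨z1, z2, hne, hZ⟩ := Finset.card_eq_two.mp hZcard
    have hZset : (Z : Set (EuclideanSpace ℝ (Fin d))) = {z1, z2} := by
      rw [hZ]; simp
    have hmem1 : z1 ∈ (Z : Set (EuclideanSpace ℝ (Fin d))) := by
      rw [hZset]; exact Set.mem_insert _ _
    have hmem2 : z2 ∈ (Z : Set (EuclideanSpace ℝ (Fin d))) := by
      rw [hZset]; exact Set.mem_insert_iff.mpr (Or.inr rfl)
    have hz1c : z1 ∈ unitCube d := hZsub hmem1
    have hz2c : z2 ∈ unitCube d := hZsub hmem2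
    obtain ⟨x, hxc, hs1, hs2⟩ := exists_far z1 z2 hz1c hz2c
    refine le_covRad_of _ z1 hmem1 hz1c x hxc _ ?_
    rw [hrdef]
    apply le_infDist_of x _ ⟨z1, hmem1⟩
    intro z hz
    rw [hZset] at hz
    simp only [Set.mem_insert_iff, Set.mem_singleton_iff] at hz
    rcases hz with rfl | rfl
    · rw [dist_eq_sqrt_sum]; exact Real.sqrt_le_sqrt hs1
    · rw [dist_eq_sqrt_sum]; exact Real.sqrt_le_sqrt hs2
  · -- Part 2: the optimal design
    apply le_antisymm
    · apply covRad_le_of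
      intro x hxc
      rw [hrdef]
      by_cases hx2 : x last ≤ 1/2
      · refine le_trans (infDist_le_dist_of_mem (Set.mem_insert _ _)) ?_
        rw [dist_eq_sqrt_sum]
        apply Real.sqrt_le_sqrt
        rw [← hsum_target]
        refine Finset.sum_le_sum fun i _ => ?_
        have hxi := hxc i
        simp only [Set.mem_Icc] at hxi
        rw [hz_app i]
        by_cases hil : i = last
        · rw [if_pos ((hlast_iff i).mpr hil), if_pos hil]
          have hxle : x i ≤ 1/2 := by rw [hil]; exact hx2
          nlinarith [hxi.1]
        · rw [if_neg (fun hcon => hil ((hlast_iff i).mp hcon)), if_neg hil]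
          nlinarith [hxi.1, hxi.2]
      · push_neg at hx2
        refine le_trans (infDist_le_dist_of_mem
          (Set.mem_insert_iff.mpr (Or.inr rfl))) ?_
        rw [dist_eq_sqrt_sum]
        apply Real.sqrt_le_sqrt
        rw [← hsum_target]
        refine Finset.sum_le_sum fun i _ => ?_
        have hxi := hxc i
        simp only [Set.mem_Icc] at hxi
        rw [ho_app i]
        by_cases hil : i = last
        · rw [if_pos ((hlast_iff i).mpr hil), if_pos hil]
          have hxge : 1/2 ≤ x i := by rw [hil]; exact le_of_lt hx2
          nlinarith [hxi.2]
        · rw [if_neg (fun hcon => hil ((hlast_iff i).mp hcon)), if_neg hil]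
          nlinarith [hxi.1, hxi.2]
    · have h0c : (0 : EuclideanSpace ℝ (Fin d)) ∈ unitCube d := by
        intro i
        simp only [Set.mem_Icc]
        norm_num
      refine le_covRad_of _ (zStar d) (Set.mem_insert _ _) hzsc 0 h0c _ ?_
      rw [hrdef]
      apply le_infDist_of _ _ ⟨zStar d, Set.mem_insert _ _⟩
      intro z hz
      simp only [Set.mem_insert_iff, Set.mem_singleton_iff] at hz
      rcases hz with rfl | rfl
      · rw [dist_eq_sqrt_sum]
        apply Real.sqrt_le_sqrt
        rw [← hsum_target]
        refine Finset.sum_le_sum fun i _ => ?_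
        rw [hz_app i]
        by_cases hil : i = last
        · rw [if_pos ((hlast_iff i).mpr hil), if_pos hil]
          norm_num
        · rw [if_neg (fun hcon => hil ((hlast_iff i).mp hcon)), if_neg hil]
          norm_num
      · rw [dist_eq_sqrt_sum]
        apply Real.sqrt_le_sqrt
        rw [← hsum_target]
        refine Finset.sum_le_sum fun i _ => ?_
        rw [ho_app i]
        by_cases hil : i = last
        · rw [if_pos ((hlast_iff i).mpr hil), if_pos hil]
          norm_num
        · rw [if_neg (fun hcon => hil ((hlast_iff i).mp hcon)), if_neg hil]
          norm_num
  · -- Part 3: designs containing the center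
    intro z hzc
    have hcapp : ∀ i : Fin d, cubeCenter d i = 1/2 := fun i => rfl
    have hsqd : Real.sqrt d / 2 = Real.sqrt ((d:ℝ)/4) := by
      rw [sqrt_div_two _ (Nat.cast_nonneg d)]
    apply le_antisymm
    · apply covRad_le_of
      intro x hxc
      refine le_trans (infDist_le_dist_of_mem (Set.mem_insert _ _)) ?_
      rw [dist_eq_sqrt_sum, hsqd]
      apply Real.sqrt_le_sqrt
      calc ∑ i, (x i - cubeCenter d i)^2 ≤ ∑ _i : Fin d, (1/4:ℝ) := by
            refine Finset.sum_le_sum fun i _ => ?_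
            rw [hcapp i]
            have hxi := hxc i
            simp only [Set.mem_Icc] at hxi
            nlinarith [hxi.1, hxi.2]
        _ = (d:ℝ)/4 := sum_quarter d
    · set w : EuclideanSpace ℝ (Fin d) := (WithLp.equiv 2 (Fin d → ℝ)).symm
        (fun i => if z i ≤ 1/2 then (1:ℝ) else 0) with hwdef
      have hwapp : ∀ i, w i = if z i ≤ 1/2 then (1:ℝ) else 0 := fun i => rfl
      have hwc : w ∈ unitCube d := by
        intro i
        rw [hwapp i]
        simp only [Set.mem_Icc]
        split_ifs <;> norm_num
      refine le_covRad_of _ (cubeCenter d) (Set.mem_insert _ _) (cubeCenter_mem d)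
        w hwc _ ?_
      rw [hsqd]
      apply le_infDist_of _ _ ⟨cubeCenter d, Set.mem_insert _ _⟩
      intro y hy
      simp only [Set.mem_insert_iff, Set.mem_singleton_iff] at hy
      rcases hy with rfl | rfl
      · rw [dist_eq_sqrt_sum]
        apply Real.sqrt_le_sqrt
        rw [← sum_quarter d]
        refine Finset.sum_le_sum fun i _ => ?_
        rw [hwapp i, hcapp i]
        split_ifs <;> norm_num
      · rw [dist_eq_sqrt_sum]
        apply Real.sqrt_le_sqrt
        rw [← sum_quarter d]
        refine Finset.sum_le_sum fun i _ => ?_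
        rw [hwapp i]
        have hzi := hzc i
        simp only [Set.mem_Icc] at hzi
        split_ifs with hzi2
        · nlinarith [hzi.2]
        · push_neg at hzi2
          nlinarith [hzi.1]
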